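/- The conditional dependence atom is not definable in LFD: over the vocabulary with two variables x, y and one binary predicate symbol P, there is no LFD formula θ such that for every dependence model M = (O, I, A) and every admissible assignment s ∈ A, M, s ⊨ θ holds iff s satisfies the conditional dependence D_x^{Pxy} y, i.e., iff for all t ∈ A, (t ⊨ Pxy and s =_x t) implies s =_y t. -/
import Mathlib


namespace LFD

/-- LFD formulas over variables `V` and a relational vocabulary `Pred` with arity map `ar`:
atoms `P x₁…x_n`, negation, conjunction, dependence modalities `𝔻_X φ`,
and dependence atoms `D_X y` (with `X ⊆ V` finite). -/
inductive Formula (V Pred : Type) (ar : Pred → ℕ) : Type where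
  | atom (P : Pred) (x : Fin (ar P) → V)
  | neg (φ : Formula V Pred ar)
  | conj (φ ψ : Formula V Pred ar)
  | dd (X : Finset V) (φ : Formula V Pred ar)
  | dep (X : Finset V) (y : V)

variable {V Pred O : Type} {ar : Pred → ℕ}

/-- The free variables of an LFD formula. -/
def Free [DecidableEq V] : Formula V Pred ar → Finset V
  | .atom _ x => Finset.univ.image x
  | .neg φ => Free φ
  | .conj φ ψ => Free φ ∪ Free ψ
  | .dd X _ => X
  | .dep X _ => X

/-- A dependence model: an interpretation `I` of each predicate symbol as a set of
tuples of objects, together with a set `A` of admissible assignments. -/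
structure DepModel (V Pred : Type) (ar : Pred → ℕ) (O : Type) where
  I : (P : Pred) → Set (Fin (ar P) → O)
  A : Set (V → O)

/-- `s =_X t` : the assignments `s` and `t` agree on all variables in `X`. -/
def agree (X : Set V) (s t : V → O) : Prop := ∀ x ∈ X, s x = t x

/-- Truth of an LFD formula at an assignment in a dependence model. -/
def Sat (M : DepModel V Pred ar O) : Formula V Pred ar → (V → O) → Prop
  | .atom P x, s => (fun i => s (x i)) ∈ M.I P
  | .neg φ, s => ¬ Sat M φ s
  | .conj φ ψ, s => Sat M φ s ∧ Sat M ψ s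
  | .dd X φ, s => ∀ t ∈ M.A, agree (↑X) s t → Sat M φ t
  | .dep X y, s => ∀ t ∈ M.A, agree (↑X) s t → s y = t y

end LFD

open LFD

/-- The atomic formula `P x y` over the vocabulary with the two variables
`x = 0, y = 1 : Fin 2` and a single binary predicate symbol. -/
def Pxy : Formula (Fin 2) Unit (fun _ => 2) :=
  Formula.atom () (fun i => i)

/-! ### Auxiliary constructions for the undefinability proof -/

/-- Assignments (pairs of objects in `Fin 4`). -/
def f01 : Fin 2 → Fin 4 := ![0, 1]
def f02 : Fin 2 → Fin 4 := ![0, 2]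
def f03 : Fin 2 → Fin 4 := ![0, 3]

/-- First model: `P = {(0,1)}`, admissible assignments `{(0,1), (0,2)}`. -/
def M1 : DepModel (Fin 2) Unit (fun _ => 2) (Fin 4) where
  I := fun _ => {v | v 0 = 0 ∧ v 1 = 1}
  A := {f | f = f01 ∨ f = f02}

/-- Second model: `P = {(0,1), (0,2)}`, admissible assignments `{(0,1), (0,2), (0,3)}`. -/
def M2 : DepModel (Fin 2) Unit (fun _ => 2) (Fin 4) where
  I := fun _ => {v | v 0 = 0 ∧ (v 1 = 1 ∨ v 1 = 2)}
  A := {f | f = f01 ∨ f = f02 ∨ f = f03}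

/-- The bisimulation relation between the two models. -/
def Z (s t : Fin 2 → Fin 4) : Prop :=
  (s = f01 ∧ (t = f01 ∨ t = f02)) ∨ (s = f02 ∧ t = f03)

lemma memA1_iff (u : Fin 2 → Fin 4) : u ∈ M1.A ↔ (u = f01 ∨ u = f02) := Iff.rfl

lemma memA2_iff (u : Fin 2 → Fin 4) : u ∈ M2.A ↔ (u = f01 ∨ u = f02 ∨ u = f03) := Iff.rfl

lemma agree_iff (X : Finset (Fin 2)) (s t : Fin 2 → Fin 4) :
    agree (↑X : Set (Fin 2)) s t ↔ ∀ x ∈ X, s x = t x := by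
  simp [agree]

lemma eqA1 (s u : Fin 2 → Fin 4) (hs : s ∈ M1.A) (hu : u ∈ M1.A) (h : s 1 = u 1) :
    s = u := by
  rw [memA1_iff] at hs hu
  rcases hs with rfl | rfl <;> rcases hu with rfl | rfl <;> first | rfl | (exfalso; revert h; decide)

lemma eqA2 (s u : Fin 2 → Fin 4) (hs : s ∈ M2.A) (hu : u ∈ M2.A) (h : s 1 = u 1) :
    s = u := by
  rw [memA2_iff] at hs hu
  rcases hs with rfl | rfl | rfl <;> rcases hu with rfl | rfl | rfl <;>
    first | rfl | (exfalso; revert h; decide)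

lemma agreeA1 (X : Finset (Fin 2)) (s u : Fin 2 → Fin 4) (hs : s ∈ M1.A) (hu : u ∈ M1.A)
    (hX : (1 : Fin 2) ∉ X) : agree (↑X : Set (Fin 2)) s u := by
  rw [agree_iff]
  intro x hx
  fin_cases x
  · rw [memA1_iff] at hs hu
    rcases hs with rfl | rfl <;> rcases hu with rfl | rfl <;> decide
  · exact absurd hx hX

lemma agreeA2 (X : Finset (Fin 2)) (s u : Fin 2 → Fin 4) (hs : s ∈ M2.A) (hu : u ∈ M2.A)
    (hX : (1 : Fin 2) ∉ X) : agree (↑X : Set (Fin 2)) s u := by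
  rw [agree_iff]
  intro x hx
  fin_cases x
  · rw [memA2_iff] at hs hu
    rcases hs with rfl | rfl | rfl <;> rcases hu with rfl | rfl | rfl <;> decide
  · exact absurd hx hX

lemma Z_memA1 {s t : Fin 2 → Fin 4} (h : Z s t) : s ∈ M1.A := by
  rw [memA1_iff]; rcases h with ⟨rfl, _⟩ | ⟨rfl, _⟩ <;> simp

lemma Z_memA2 {s t : Fin 2 → Fin 4} (h : Z s t) : t ∈ M2.A := by
  rw [memA2_iff]
  rcases h with ⟨_, rfl | rfl⟩ | ⟨_, rfl⟩ <;> simp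

lemma bisim (φ : Formula (Fin 2) Unit (fun _ => 2)) :
    ∀ s t, Z s t → (Sat M1 φ s ↔ Sat M2 φ t) := by
  induction φ with
  | atom P x =>
    intro s t hZ
    cases P
    rcases hZ with ⟨rfl, rfl | rfl⟩ | ⟨rfl, rfl⟩ <;>
      · simp only [Sat, M1, M2, Set.mem_setOf_eq]
        revert x; decide
  | neg φ ih =>
    intro s t hZ
    exact not_congr (ih s t hZ)
  | conj φ ψ ih1 ih2 =>
    intro s t hZ
    exact and_congr (ih1 s t hZ) (ih2 s t hZ)
  | dd X φ ih =>
    intro s t hZ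
    show (∀ u ∈ M1.A, agree (↑X : Set (Fin 2)) s u → Sat M1 φ u) ↔ (∀ u ∈ M2.A, agree (↑X : Set (Fin 2)) t u → Sat M2 φ u)
    by_cases hX : (1 : Fin 2) ∈ X
    · -- agreement on X forces equality of assignments
      have h1 : (∀ u ∈ M1.A, agree (↑X : Set (Fin 2)) s u → Sat M1 φ u) ↔ Sat M1 φ s := by
        constructor
        · intro h
          exact h s (Z_memA1 hZ) (by rw [agree_iff]; intro x _; rfl)
        · intro h u hu hag
          have : s = u := eqA1 s u (Z_memA1 hZ) hu ((agree_iff X s u).1 hag 1 hX)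
          rwa [← this]
      have h2 : (∀ u ∈ M2.A, agree (↑X : Set (Fin 2)) t u → Sat M2 φ u) ↔ Sat M2 φ t := by
        constructor
        · intro h
          exact h t (Z_memA2 hZ) (by rw [agree_iff]; intro x _; rfl)
        · intro h u hu hag
          have : t = u := eqA2 t u (Z_memA2 hZ) hu ((agree_iff X t u).1 hag 1 hX)
          rwa [← this]
      rw [h1, h2]
      exact ih s t hZ
    · -- all admissible assignments agree on X
      have h1 : (∀ u ∈ M1.A, agree (↑X : Set (Fin 2)) s u → Sat M1 φ u) ↔
          (Sat M1 φ f01 ∧ Sat M1 φ f02) := by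
        constructor
        · intro h
          exact ⟨h f01 (Or.inl rfl) (agreeA1 X s f01 (Z_memA1 hZ) (Or.inl rfl) hX),
                 h f02 (Or.inr rfl) (agreeA1 X s f02 (Z_memA1 hZ) (Or.inr rfl) hX)⟩
        · rintro ⟨h1, h2⟩ u hu _
          rcases (memA1_iff u).1 hu with rfl | rfl
          · exact h1
          · exact h2
      have h2 : (∀ u ∈ M2.A, agree (↑X : Set (Fin 2)) t u → Sat M2 φ u) ↔
          (Sat M2 φ f01 ∧ Sat M2 φ f02 ∧ Sat M2 φ f03) := by
        constructor
        · intro h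
          exact ⟨h f01 (Or.inl rfl) (agreeA2 X t f01 (Z_memA2 hZ) (Or.inl rfl) hX),
                 h f02 (Or.inr (Or.inl rfl)) (agreeA2 X t f02 (Z_memA2 hZ) (Or.inr (Or.inl rfl)) hX),
                 h f03 (Or.inr (Or.inr rfl)) (agreeA2 X t f03 (Z_memA2 hZ) (Or.inr (Or.inr rfl)) hX)⟩
        · rintro ⟨h1, h2, h3⟩ u hu _
          rcases (memA2_iff u).1 hu with rfl | rfl | rfl
          · exact h1
          · exact h2
          · exact h3
      rw [h1, h2]
      have e1 : Sat M1 φ f01 ↔ Sat M2 φ f01 := ih f01 f01 (Or.inl ⟨rfl, Or.inl rfl⟩)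
      have e2 : Sat M1 φ f01 ↔ Sat M2 φ f02 := ih f01 f02 (Or.inl ⟨rfl, Or.inr rfl⟩)
      have e3 : Sat M1 φ f02 ↔ Sat M2 φ f03 := ih f02 f03 (Or.inr ⟨rfl, rfl⟩)
      constructor
      · rintro ⟨a, b⟩
        exact ⟨e1.1 a, e2.1 a, e3.1 b⟩
      · rintro ⟨a, b, c⟩
        exact ⟨e1.2 a, e3.2 c⟩
  | dep X y =>
    intro s t hZ
    show (∀ u ∈ M1.A, agree (↑X : Set (Fin 2)) s u → s y = u y) ↔ (∀ u ∈ M2.A, agree (↑X : Set (Fin 2)) t u → t y = u y)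
    by_cases hX : (1 : Fin 2) ∈ X
    · constructor
      · intro _ u hu hag
        have : t = u := eqA2 t u (Z_memA2 hZ) hu ((agree_iff X t u).1 hag 1 hX)
        rw [this]
      · intro _ u hu hag
        have : s = u := eqA1 s u (Z_memA1 hZ) hu ((agree_iff X s u).1 hag 1 hX)
        rw [this]
    · -- both sides are equivalent to `y = 0`
      have hs1 := Z_memA1 hZ
      have ht2 := Z_memA2 hZ
      constructor
      · intro h u hu _
        fin_cases y
        · rw [memA2_iff] at hu ht2
          rcases ht2 with rfl | rfl | rfl <;> rcases hu with rfl | rfl | rfl <;> rfl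
        · exfalso
          rw [memA1_iff] at hs1
          rcases hs1 with rfl | rfl
          · have := h f02 (Or.inr rfl) (agreeA1 X f01 f02 (Or.inl rfl) (Or.inr rfl) hX)
            revert this; decide
          · have := h f01 (Or.inl rfl) (agreeA1 X f02 f01 (Or.inr rfl) (Or.inl rfl) hX)
            revert this; decide
      · intro h u hu _
        fin_cases y
        · rw [memA1_iff] at hu hs1
          rcases hs1 with rfl | rfl <;> rcases hu with rfl | rfl <;> rfl
        · exfalso
          rw [memA2_iff] at ht2
          rcases ht2 with rfl | rfl | rfl
          · have := h f02 (Or.inr (Or.inl rfl)) (agreeA2 X f01 f02 (Or.inl rfl) (Or.inr (Or.inl rfl)) hX)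
            revert this; decide
          · have := h f01 (Or.inl rfl) (agreeA2 X f02 f01 (Or.inr (Or.inl rfl)) (Or.inl rfl) hX)
            revert this; decide
          · have := h f01 (Or.inl rfl) (agreeA2 X f03 f01 (Or.inr (Or.inr rfl)) (Or.inl rfl) hX)
            revert this; decide

/-- The conditional dependence atom is not definable in LFD: over the vocabulary with
two variables `x, y` and one binary predicate `P`, there is no LFD formula `θ` such
that, in every dependence model and at every admissible assignment `s`, `θ` is true at
`s` iff `D_x^{Pxy} y` holds at `s` (i.e. iff every admissible `t` satisfying `Pxy` and
agreeing with `s` on `x` agrees with `s` on `y`). -/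
theorem stmt19 :
    ¬ ∃ θ : Formula (Fin 2) Unit (fun _ => 2),
      ∀ (O : Type) (M : DepModel (Fin 2) Unit (fun _ => 2) O) (s : Fin 2 → O),
        s ∈ M.A →
        (Sat M θ s ↔
          ∀ t ∈ M.A, Sat M Pxy t → s 0 = t 0 → s 1 = t 1) := by
  rintro ⟨θ, hθ⟩
  -- In M1, the conditional dependence holds at f01
  have h1 : Sat M1 θ f01 := by
    rw [hθ (Fin 4) M1 f01 (Or.inl rfl)]
    intro t ht hP _
    rcases (memA1_iff t).1 ht with rfl | rfl
    · rfl
    · exfalso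
      have : (fun i => f02 ((fun i : Fin 2 => i) i)) ∈ M1.I () := hP
      revert this
      simp only [M1, Set.mem_setOf_eq]
      decide
  -- In M2, the conditional dependence fails at f01
  have h2 : ¬ Sat M2 θ f01 := by
    rw [hθ (Fin 4) M2 f01 (Or.inl rfl)]
    intro h
    have := h f02 (Or.inr (Or.inl rfl)) (by
      show (fun i => f02 ((fun i : Fin 2 => i) i)) ∈ M2.I ()
      simp only [M2, Set.mem_setOf_eq]
      decide) rfl
    revert this; decide
  exact h2 ((bisim θ f01 f01 (Or.inl ⟨rfl, Or.inl rfl⟩)).1 h1)
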